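/- Let d and k be integers with 1 ≤ k < d, and let t₁, …, t_{2k+2} ∈ ℤ^d be an O_k-configuration that is not ℓ1-isometric to O_k. Then the vertex set V = {t₁, …, t_{2k+2}} can be partitioned into nonempty subsets V₁ and V₂ with 1 ≤ |V₁| ≤ k+1 such that ‖s − t‖₁ ≥ 3 for every s ∈ V₁ and every t ∈ V₂. -/
import Mathlib


/-- The `ℓ∞` distance between two points of `ℤ^d`, as a natural number. -/
def linfDist {d : ℕ} (x y : Fin d → ℤ) : ℕ :=
  Finset.univ.sup fun i => (x i - y i).natAbs

/-- The `ℓ1` distance between two points of `ℤ^d`, as a natural number. -/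
def l1Dist {d : ℕ} (x y : Fin d → ℤ) : ℕ :=
  ∑ i, (x i - y i).natAbs

/-- A family of `2k+2` distinct points of `ℤ^d` is an `O_k`-configuration if, in the graph on the
indices with an edge exactly when the `ℓ∞` distance is `1`, every index is adjacent to all others
except exactly one. -/
def IsOkConfig (d k : ℕ) (t : Fin (2 * k + 2) → Fin d → ℤ) : Prop :=
  Function.Injective t ∧
    ∀ i : Fin (2 * k + 2), ∃! i' : Fin (2 * k + 2), i' ≠ i ∧ linfDist (t i) (t i') ≠ 1

lemma l1Dist_comm {d : ℕ} (x y : Fin d → ℤ) : l1Dist x y = l1Dist y x := by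
  unfold l1Dist
  exact Finset.sum_congr rfl fun i _ => by omega

lemma linfDist_comm {d : ℕ} (x y : Fin d → ℤ) : linfDist x y = linfDist y x := by
  unfold linfDist
  exact Finset.sup_congr rfl fun i _ => by omega

lemma linfDist_coord_le {d : ℕ} {x y : Fin d → ℤ} {m : ℕ} (h : linfDist x y ≤ m) (c : Fin d) :
    (x c - y c).natAbs ≤ m := by
  unfold linfDist at h
  exact le_trans (Finset.le_sup (f := fun i => (x i - y i).natAbs) (Finset.mem_univ c)) h

/-- For `1 ≤ k < d`, if an `O_k`-configuration is not `ℓ1`-isometric to `O_k`,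
then its vertex set can be partitioned into nonempty subsets `V₁`, `V₂` with `|V₁| ≤ k + 1` such
that every point of `V₁` is at `ℓ1` distance at least `3` from every point of `V₂`. -/
theorem okConfig_not_isometric_partition (d k : ℕ) (hk : 1 ≤ k) (hkd : k < d)
    (ts : Fin (2 * k + 2) → Fin d → ℤ) (ht : IsOkConfig d k ts)
    (hnotiso : ¬ ∀ i j : Fin (2 * k + 2), i ≠ j → l1Dist (ts i) (ts j) = 2) :
    ∃ V₁ V₂ : Finset (Fin d → ℤ),
      V₁ ∪ V₂ = Finset.image ts Finset.univ ∧
      Disjoint V₁ V₂ ∧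
      V₁.Nonempty ∧ V₂.Nonempty ∧
      V₁.card ≤ k + 1 ∧
      ∀ s ∈ V₁, ∀ t ∈ V₂, 3 ≤ l1Dist s t := by
  classical
  obtain ⟨hinj, hadj⟩ := ht
  choose σ hp hu using hadj
  have hσne : ∀ i, σ i ≠ i := fun i => (hp i).1
  have hσlinf : ∀ i, linfDist (ts i) (ts (σ i)) ≠ 1 := fun i => (hp i).2
  have hσσ : ∀ i, σ (σ i) = i := by
    intro i
    exact (hu (σ i) i ⟨Ne.symm (hσne i), by rw [linfDist_comm]; exact hσlinf i⟩).symm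
  have hσinj : ∀ i j, σ i = σ j → i = j := by
    intro i j h
    have := congrArg σ h
    rwa [hσσ, hσσ] at this
  have hadj1 : ∀ i j, j ≠ i → j ≠ σ i → linfDist (ts i) (ts j) = 1 := by
    intro i j h1 h2
    by_contra h
    exact h2 (hu i j ⟨h1, h⟩)
  have hcoord1 : ∀ i j, j ≠ i → j ≠ σ i → ∀ c, (ts i c - ts j c).natAbs ≤ 1 := by
    intro i j h1 h2 c
    exact linfDist_coord_le (le_of_eq (hadj1 i j h1 h2)) c
  have hthird : ∀ i : Fin (2 * k + 2), ∃ z, z ≠ i ∧ z ≠ σ i := by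
    intro i
    have hcard : ({i, σ i} : Finset (Fin (2 * k + 2))).card ≤ 2 :=
      le_trans (Finset.card_insert_le _ _) (by simp)
    have hpos : 0 < (({i, σ i} : Finset (Fin (2 * k + 2)))ᶜ).card := by
      rw [Finset.card_compl, Fintype.card_fin]; omega
    obtain ⟨z, hz⟩ := Finset.card_pos.mp hpos
    rw [Finset.mem_compl] at hz
    exact ⟨z, by simpa using hz⟩
  have hpair2 : ∀ i c, (ts i c - ts (σ i) c).natAbs ≤ 2 := by
    intro i c
    obtain ⟨z, hz1, hz2⟩ := hthird i
    have h1 := hcoord1 i z hz1 hz2 c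
    have h2 := hcoord1 (σ i) z hz2 (by rw [hσσ]; exact hz1) c
    omega
  have hmid : ∀ i c z, (ts i c - ts (σ i) c).natAbs = 2 → z ≠ i → z ≠ σ i →
      2 * ts z c = ts i c + ts (σ i) c := by
    intro i c z h2 hz1 hz2
    have h1 := hcoord1 i z hz1 hz2 c
    have h3 := hcoord1 (σ i) z hz2 (by rw [hσσ]; exact hz1) c
    omega
  have hSne : ∀ i, ∃ c, (ts i c - ts (σ i) c).natAbs = 2 := by
    intro i
    by_contra h
    push_neg at h
    have hle : linfDist (ts i) (ts (σ i)) ≤ 1 :=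
      Finset.sup_le fun c _ => by have := hpair2 i c; have := h c; omega
    have h0 : linfDist (ts i) (ts (σ i)) ≤ 0 := by
      have := hσlinf i; omega
    have heq : ts i = ts (σ i) := by
      funext c
      have := linfDist_coord_le h0 c
      omega
    exact hσne i (hinj heq.symm)
  choose jc hjc using hSne
  have hspec_pair : ∀ i j c, (ts i c - ts (σ i) c).natAbs = 2 →
      (ts j c - ts (σ j) c).natAbs = 2 → j = i ∨ j = σ i := by
    intro i j c hi hj
    by_contra h
    push_neg at h
    obtain ⟨h1, h2⟩ := h
    have hσji : σ j ≠ i := by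
      intro he
      exact h2 (by rw [← hσσ j, he])
    have hσjσi : σ j ≠ σ i := fun he => h1 (hσinj j i he)
    have hm1 := hmid i c j hi h1 h2
    have hm2 := hmid i c (σ j) hi hσji hσjσi
    omega
  -- distances to a pair member are ≥ 1 at each of its own spread coordinates,
  -- and ≥ 1 at the spread coordinate of the other's pair
  by_cases hA : ∃ i c c', c ≠ c' ∧ (ts i c - ts (σ i) c).natAbs = 2 ∧
      (ts i c' - ts (σ i) c').natAbs = 2
  · -- Case A: some pair has two spread coordinates; that pair is far from everything
    obtain ⟨i, c₁, c₂, hcc, h1, h2⟩ := hA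
    have key : ∀ i' c₁' c₂', c₁' ≠ c₂' → (ts i' c₁' - ts (σ i') c₁').natAbs = 2 →
        (ts i' c₂' - ts (σ i') c₂').natAbs = 2 →
        ∀ j, j ≠ i' → j ≠ σ i' → 3 ≤ l1Dist (ts i') (ts j) := by
      intro i' c₁' c₂' hne h1' h2' j hj1 hj2
      set c₃ := jc j with hc₃
      have h3 : (ts j c₃ - ts (σ j) c₃).natAbs = 2 := hjc j
      have hc31 : c₃ ≠ c₁' := by
        intro he
        rcases hspec_pair i' j c₁' h1' (by rw [← he]; exact h3) with h | h
        · exact hj1 h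
        · exact hj2 h
      have hc32 : c₃ ≠ c₂' := by
        intro he
        rcases hspec_pair i' j c₂' h2' (by rw [← he]; exact h3) with h | h
        · exact hj1 h
        · exact hj2 h
      have hiσj : i' ≠ σ j := by
        intro he
        apply hj2
        have := congrArg σ he
        rw [hσσ] at this
        exact this.symm
      have f1 : (ts i' c₁' - ts j c₁').natAbs = 1 := by
        have := hmid i' c₁' j h1' hj1 hj2; omega
      have f2 : (ts i' c₂' - ts j c₂').natAbs = 1 := by
        have := hmid i' c₂' j h2' hj1 hj2; omega
      have f3 : (ts i' c₃ - ts j c₃).natAbs = 1 := by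
        have := hmid j c₃ i' h3 (Ne.symm hj1) hiσj; omega
      have hsub : ∑ c ∈ ({c₁', c₂', c₃} : Finset (Fin d)), (ts i' c - ts j c).natAbs ≤
          l1Dist (ts i') (ts j) :=
        Finset.sum_le_sum_of_subset (Finset.subset_univ _)
      rw [Finset.sum_insert (by simp [hne, Ne.symm hc31]),
        Finset.sum_insert (by simp [Ne.symm hc32]), Finset.sum_singleton] at hsub
      omega
    have hV1sub : ({ts i, ts (σ i)} : Finset (Fin d → ℤ)) ⊆ Finset.image ts Finset.univ := by
      intro x hx
      simp only [Finset.mem_insert, Finset.mem_singleton] at hx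
      rcases hx with h | h <;> · rw [h]; exact Finset.mem_image_of_mem ts (Finset.mem_univ _)
    refine ⟨{ts i, ts (σ i)}, Finset.image ts Finset.univ \ {ts i, ts (σ i)},
      Finset.union_sdiff_of_subset hV1sub, Finset.disjoint_sdiff, ⟨ts i, by simp⟩, ?_, ?_, ?_⟩
    · obtain ⟨z, hz1, hz2⟩ := hthird i
      refine ⟨ts z, Finset.mem_sdiff.mpr ⟨Finset.mem_image_of_mem ts (Finset.mem_univ _), ?_⟩⟩
      simp only [Finset.mem_insert, Finset.mem_singleton]
      push_neg
      exact ⟨fun h => hz1 (hinj h), fun h => hz2 (hinj h)⟩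
    · exact le_trans (Finset.card_insert_le _ _) (by simp; omega)
    · intro s hs t htm
      obtain ⟨htimg, htne⟩ := Finset.mem_sdiff.mp htm
      obtain ⟨z, _, hz⟩ := Finset.mem_image.mp htimg
      simp only [Finset.mem_insert, Finset.mem_singleton] at htne
      push_neg at htne
      have hz1 : z ≠ i := fun h => htne.1 (by rw [← hz, h])
      have hz2 : z ≠ σ i := fun h => htne.2 (by rw [← hz, h])
      simp only [Finset.mem_insert, Finset.mem_singleton] at hs
      rcases hs with h | h
      · rw [h, ← hz]
        exact key i c₁ c₂ hcc h1 h2 z hz1 hz2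
      · rw [h, ← hz]
        refine key (σ i) c₁ c₂ hcc ?_ ?_ z hz2 (by rw [hσσ]; exact hz1)
        · rw [hσσ]; omega
        · rw [hσσ]; omega
  · -- Case B: every pair has a unique spread coordinate
    push_neg at hA
    have huniq : ∀ i c c', (ts i c - ts (σ i) c).natAbs = 2 →
        (ts i c' - ts (σ i) c').natAbs = 2 → c = c' := by
      intro i c c' hc hc'
      by_contra h
      exact hA i c c' h hc hc'
    have hjcσ : ∀ i, jc (σ i) = jc i := by
      intro i
      have h1 : (ts i (jc (σ i)) - ts (σ i) (jc (σ i))).natAbs = 2 := by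
        have := hjc (σ i); rw [hσσ] at this; omega
      exact huniq i _ _ h1 (hjc i)
    set Spec : Fin d → Prop := fun c => ∃ p, (ts p c - ts (σ p) c).natAbs = 2 with hSpec
    -- key vanishing fact: at a spec coordinate not belonging to the pairs of i or j,
    -- points i and j agree
    have hvanish : ∀ i j c, Spec c → c ≠ jc i → c ≠ jc j → ts i c = ts j c := by
      intro i j c hs hci hcj
      obtain ⟨p, hp2⟩ := hs
      have hcp : c = jc p := huniq p c (jc p) hp2 (hjc p)
      have hpi : p ≠ i := fun he => hci (by rw [← he]; exact hcp)
      have hpσi : p ≠ σ i := fun he => hci (by rw [hcp, he, hjcσ])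
      have hpj : p ≠ j := fun he => hcj (by rw [← he]; exact hcp)
      have hpσj : p ≠ σ j := fun he => hcj (by rw [hcp, he, hjcσ])
      have m1 := hmid p c i hp2 (Ne.symm hpi)
        (fun he => hpσi (by rw [← hσσ p, ← he] ))
      have m2 := hmid p c j hp2 (Ne.symm hpj)
        (fun he => hpσj (by rw [← hσσ p, ← he] ))
      omega
    -- the unit facts
    have hunit : ∀ i j, j ≠ i → j ≠ σ i → (ts i (jc i) - ts j (jc i)).natAbs = 1 := by
      intro i j hj1 hj2
      have := hmid i (jc i) j (hjc i) hj1 hj2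
      have := hjc i
      omega
    have hjcne : ∀ i j, j ≠ i → j ≠ σ i → jc j ≠ jc i := by
      intro i j hj1 hj2 he
      rcases hspec_pair i j (jc i) (hjc i) (by rw [← he]; exact hjc j) with h | h
      · exact hj1 h
      · exact hj2 h
    have hB1 : ∀ i j, j ≠ i → (∀ c, ¬ Spec c → ts i c = ts j c) →
        l1Dist (ts i) (ts j) = 2 := by
      intro i j hij hππ
      have hvan : ∀ c ∈ Finset.univ, c ∉ ({jc i, jc j} : Finset (Fin d)) →
          (ts i c - ts j c).natAbs = 0 := by
        intro c _ hc
        simp only [Finset.mem_insert, Finset.mem_singleton] at hc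
        push_neg at hc
        by_cases hs : Spec c
        · have := hvanish i j c hs hc.1 hc.2; omega
        · have := hππ c hs; omega
      have hsum : l1Dist (ts i) (ts j) =
          ∑ c ∈ ({jc i, jc j} : Finset (Fin d)), (ts i c - ts j c).natAbs :=
        (Finset.sum_subset (Finset.subset_univ _) hvan).symm
      by_cases hjsig : j = σ i
      · subst hjsig
        rw [hjcσ, Finset.insert_eq_self.mpr (Finset.mem_singleton_self _)] at hsum
        rw [hsum, Finset.sum_singleton]
        exact hjc i
      · have hne : jc i ≠ jc j := Ne.symm (hjcne i j hij hjsig)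
        rw [Finset.sum_insert (by simpa using hne), Finset.sum_singleton] at hsum
        have f1 := hunit i j hij hjsig
        have hiσj : i ≠ σ j := by
          intro he
          apply hjsig
          have := congrArg σ he
          rw [hσσ] at this
          exact this.symm
        have f2 := hunit j i (Ne.symm hij) hiσj
        omega
    have hB2 : ∀ i j c₀, j ≠ i → ¬ Spec c₀ → ts i c₀ ≠ ts j c₀ →
        3 ≤ l1Dist (ts i) (ts j) := by
      intro i j c₀ hij hns hne0
      have hf0 : 1 ≤ (ts i c₀ - ts j c₀).natAbs := by
        have : ts i c₀ - ts j c₀ ≠ 0 := by omega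
        omega
      have hc0i : c₀ ≠ jc i := fun he => hns ⟨i, by rw [he]; exact hjc i⟩
      have hc0j : c₀ ≠ jc j := fun he => hns ⟨j, by rw [he]; exact hjc j⟩
      by_cases hjsig : j = σ i
      · subst hjsig
        have hsub : ∑ c ∈ ({c₀, jc i} : Finset (Fin d)), (ts i c - ts (σ i) c).natAbs ≤
            l1Dist (ts i) (ts (σ i)) :=
          Finset.sum_le_sum_of_subset (Finset.subset_univ _)
        rw [Finset.sum_insert (by simpa using hc0i), Finset.sum_singleton] at hsub
        have := hjc i
        omega
      · have hne : jc i ≠ jc j := Ne.symm (hjcne i j hij hjsig)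
        have hiσj : i ≠ σ j := by
          intro he
          apply hjsig
          have := congrArg σ he
          rw [hσσ] at this
          exact this.symm
        have f1 := hunit i j hij hjsig
        have f2 := hunit j i (Ne.symm hij) hiσj
        have hsub : ∑ c ∈ ({c₀, jc i, jc j} : Finset (Fin d)), (ts i c - ts j c).natAbs ≤
            l1Dist (ts i) (ts j) :=
          Finset.sum_le_sum_of_subset (Finset.subset_univ _)
        rw [Finset.sum_insert (by simp [hc0i, hc0j]),
          Finset.sum_insert (by simpa using hne), Finset.sum_singleton] at hsub
        omega
    -- build the partition
    push_neg at hnotiso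
    obtain ⟨i₀, j₀, hij₀, hl1₀⟩ := hnotiso
    set C : Finset (Fin (2 * k + 2)) :=
      Finset.univ.filter (fun p => ∀ c, ¬ Spec c → ts p c = ts i₀ c) with hC
    have hi₀C : i₀ ∈ C := by simp [hC]
    have hj₀C : j₀ ∉ C := by
      intro h
      rw [hC, Finset.mem_filter] at h
      exact hl1₀ (by rw [l1Dist_comm]; exact hB1 j₀ i₀ hij₀ h.2)
    have hcross : ∀ p q, p ∈ C → q ∉ C → 3 ≤ l1Dist (ts p) (ts q) := by
      intro p q hpC hqC
      rw [hC, Finset.mem_filter] at hpC hqC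
      push_neg at hqC
      obtain ⟨c, hcs, hcv⟩ := hqC (Finset.mem_univ q)
      refine hB2 p q c ?_ hcs (by rw [hpC.2 c hcs]; exact fun h => hcv h.symm)
      intro he
      rw [he] at hcv
      exact hcv (hpC.2 c hcs)
    have hdisj : Disjoint (C.image ts) (Cᶜ.image ts) := by
      rw [Finset.disjoint_left]
      intro x hx hx'
      obtain ⟨p, hpC, hpx⟩ := Finset.mem_image.mp hx
      obtain ⟨q, hqC, hqx⟩ := Finset.mem_image.mp hx'
      rw [Finset.mem_compl] at hqC
      exact hqC (by rwa [hinj (hqx.trans hpx.symm)])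
    have hun : C.image ts ∪ Cᶜ.image ts = Finset.image ts Finset.univ := by
      rw [← Finset.image_union, Finset.union_compl]
    have hcardC : (C.image ts).card = C.card :=
      Finset.card_image_of_injective _ hinj
    have hcardCc : (Cᶜ.image ts).card = 2 * k + 2 - C.card := by
      rw [Finset.card_image_of_injective _ hinj, Finset.card_compl, Fintype.card_fin]
    have hCle : C.card ≤ 2 * k + 2 := by
      have := Finset.card_le_univ C
      rwa [Fintype.card_fin] at this
    have hne1 : (C.image ts).Nonempty := ⟨ts i₀, Finset.mem_image_of_mem ts hi₀C⟩
    have hne2 : (Cᶜ.image ts).Nonempty :=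
      ⟨ts j₀, Finset.mem_image_of_mem ts (Finset.mem_compl.mpr hj₀C)⟩
    have hd1 : ∀ s ∈ C.image ts, ∀ t ∈ Cᶜ.image ts, 3 ≤ l1Dist s t := by
      intro s hs t htm
      obtain ⟨p, hpC, hpx⟩ := Finset.mem_image.mp hs
      obtain ⟨q, hqC, hqx⟩ := Finset.mem_image.mp htm
      rw [← hpx, ← hqx]
      exact hcross p q hpC (Finset.mem_compl.mp hqC)
    by_cases hcc : C.card ≤ k + 1
    · exact ⟨C.image ts, Cᶜ.image ts, hun, hdisj, hne1, hne2, by omega, hd1⟩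
    · refine ⟨Cᶜ.image ts, C.image ts, by rw [Finset.union_comm]; exact hun, hdisj.symm,
        hne2, hne1, by omega, ?_⟩
      intro s hs t htm
      rw [l1Dist_comm]
      exact hd1 t htm s hs
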